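/- Let m ≥ 2 be an integer, c > 0 a real, κ = m c²/(m−1), and γ_1, …, γ_m ≥ 0, and let g be the associated polynomial. Suppose θ < 0 satisfies g(θ) = 0. Then |θ| ≤ m + max_{1≤i≤m} γ_i². -/
import Mathlib


/-- `κ = m c² / (m − 1)`. -/
noncomputable def kappa (m : ℕ) (c : ℝ) : ℝ := (m : ℝ) * c ^ 2 / ((m : ℝ) - 1)

/-- The polynomial
`g(θ) = −(m+θ) ∏ᵢ (κ γᵢ² − θ) + (κ + ((κ+1)/m) θ) Σᵢ γᵢ² ∏_{j≠i} (κ γⱼ² − θ)`. -/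
noncomputable def gfun (m : ℕ) (c : ℝ) (γ : Fin m → ℝ) (θ : ℝ) : ℝ :=
  -((m : ℝ) + θ) * ∏ i, (kappa m c * γ i ^ 2 - θ) +
    (kappa m c + (kappa m c + 1) / (m : ℝ) * θ) *
      ∑ i, γ i ^ 2 * ∏ j ∈ Finset.univ.erase i, (kappa m c * γ j ^ 2 - θ)

/-- Lemma S11 of the paper: any negative root `θ` of `g` satisfies
`|θ| ≤ m + maxᵢ γᵢ²`. -/
theorem stmt15 (m : ℕ) (hm : 2 ≤ m) (c : ℝ) (hc : 0 < c)
    (γ : Fin m → ℝ) (hγ : ∀ i, 0 ≤ γ i)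
    (θ : ℝ) (hθ : θ < 0) (hroot : gfun m c γ θ = 0) :
    |θ| ≤ (m : ℝ) + ⨆ i : Fin m, γ i ^ 2 := by
  have hne : Nonempty (Fin m) := ⟨⟨0, by omega⟩⟩
  have hm2 : (2 : ℝ) ≤ (m : ℝ) := by exact_mod_cast hm
  have hm0 : (0 : ℝ) < (m : ℝ) := by linarith
  set κ := kappa m c with hκdef
  have hκ : 0 ≤ κ := by
    have : (0:ℝ) < (m:ℝ) - 1 := by linarith
    exact div_nonneg (by positivity) (le_of_lt this)
  have hle : ∀ i, γ i ^ 2 ≤ ⨆ i : Fin m, γ i ^ 2 := fun i =>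
    le_ciSup (Set.Finite.bddAbove (Set.finite_range (fun i : Fin m => γ i ^ 2))) i
  by_contra hcon
  push_neg at hcon
  rw [abs_of_neg hθ] at hcon
  -- positivity of factors
  have hfac : ∀ j : Fin m, 0 < κ * γ j ^ 2 - θ := fun j => by nlinarith [sq_nonneg (γ j)]
  have hP : 0 < ∏ j, (κ * γ j ^ 2 - θ) := Finset.prod_pos (fun j _ => hfac j)
  have hPi : ∀ i : Fin m, 0 < ∏ j ∈ Finset.univ.erase i, (κ * γ j ^ 2 - θ) :=
    fun i => Finset.prod_pos (fun j _ => hfac j)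
  set P := ∏ j, (κ * γ j ^ 2 - θ) with hPdef
  set S := ∑ i, γ i ^ 2 * ∏ j ∈ Finset.univ.erase i, (κ * γ j ^ 2 - θ) with hSdef
  have h' : -((m : ℝ) + θ) * P + (κ + (κ + 1) / (m : ℝ) * θ) * S = 0 := hroot
  have hmne : (m : ℝ) ≠ 0 := ne_of_gt hm0
  have heq : (-θ + κ * (-θ - m)) * S = (m : ℝ) * (-θ - m) * P := by
    have hkey : (-θ + κ * (-θ - m)) * S - (m : ℝ) * (-θ - m) * P =
        -(m : ℝ) * (-((m : ℝ) + θ) * P + (κ + (κ + 1) / (m : ℝ) * θ) * S) := by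
      field_simp
      ring
    rw [h'] at hkey
    linarith
  -- strict per-term inequality
  have hterm : ∀ i ∈ Finset.univ, (-θ + κ * (-θ - m)) *
      (γ i ^ 2 * ∏ j ∈ Finset.univ.erase i, (κ * γ j ^ 2 - θ)) < (-θ - m) * P := by
    intro i _
    have hprod : (κ * γ i ^ 2 - θ) * ∏ j ∈ Finset.univ.erase i, (κ * γ j ^ 2 - θ) = P :=
      Finset.mul_prod_erase Finset.univ (fun j => κ * γ j ^ 2 - θ) (Finset.mem_univ i)
    have h3 : 0 < -θ - m - γ i ^ 2 := by linarith [hle i]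
    have h4 : 0 < (∏ j ∈ Finset.univ.erase i, (κ * γ j ^ 2 - θ)) * ((-θ) * (-θ - m - γ i ^ 2)) :=
      mul_pos (hPi i) (mul_pos (by linarith) h3)
    nlinarith [h4, hprod]
  have hsum : ∑ i, (-θ + κ * (-θ - m)) *
      (γ i ^ 2 * ∏ j ∈ Finset.univ.erase i, (κ * γ j ^ 2 - θ)) <
      ∑ _i : Fin m, (-θ - m) * P :=
    Finset.sum_lt_sum_of_nonempty Finset.univ_nonempty hterm
  have hL : ∑ i, (-θ + κ * (-θ - m)) *
      (γ i ^ 2 * ∏ j ∈ Finset.univ.erase i, (κ * γ j ^ 2 - θ)) = (-θ + κ * (-θ - m)) * S := by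
    rw [hSdef, Finset.mul_sum]
  have hR : ∑ _i : Fin m, (-θ - m) * P = (m : ℝ) * ((-θ - m) * P) := by
    rw [Finset.sum_const, Finset.card_univ, Fintype.card_fin, nsmul_eq_mul]
  rw [hL, hR] at hsum
  nlinarith [hsum, heq]
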